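/- Fix R₀ > 0. There exists a constant c > 0 such that: if T is an equidistant tube of radius R ≥ R₀ around a geodesic L in the ball model of hyperbolic 3-space, the center O is not in the interior of T, the points P₁, P₂ ∈ ∂T lie outside B_H(O; N), and there exists a path on ∂T joining P₁ to P₂ which stays outside B_H(O; N), then the hyperbolic geodesic segment [P₁, P₂] lies outside B_H(O; N/4 − c). -/

import Mathlib

open Filter Set
open scoped ENNReal

noncomputable section

abbrev E3 := EuclideanSpace ℝ (Fin 3)

/-- The open unit ball: the Poincaré ball model of hyperbolic 3-space. -/
def ball3 : Set E3 := Metric.ball 0 1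

/-- Hyperbolic distance in the Poincaré ball model. -/
def hDist (x y : E3) : ℝ :=
  2 * Real.arsinh (dist x y / Real.sqrt ((1 - ‖x‖ ^ 2) * (1 - ‖y‖ ^ 2)))

/-- The hyperbolic geodesic segment between `x` and `y`: points of the ball lying
between them with respect to the hyperbolic metric. -/
def hSeg (x y : E3) : Set E3 :=
  {z | z ∈ ball3 ∧ hDist x z + hDist z y = hDist x y}

/-- A horoball in the ball model: a closed Euclidean ball internally tangent to the
unit sphere. -/
def Horoball (H : Set E3) : Prop :=
  ∃ c : E3, ∃ r : ℝ, 0 < r ∧ ‖c‖ = 1 - r ∧ H = Metric.closedBall c r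

/-- A (complete) geodesic line in the ball model. -/
def IsGeodesicLine (L : Set E3) : Prop :=
  ∃ γ : ℝ → E3, (∀ t, γ t ∈ ball3) ∧ (∀ s t, hDist (γ s) (γ t) = |s - t|) ∧ L = Set.range γ

/-- Hyperbolic distance from a point to a set. -/
def hDistToSet (x : E3) (L : Set E3) : ℝ := sInf ((hDist x) '' L)

/-- The equidistant tube of radius `R` about a geodesic line `L`. -/
def tube (L : Set E3) (R : ℝ) : Set E3 := {x ∈ ball3 | hDistToSet x L ≤ R}

/-- The boundary of the equidistant tube of radius `R` about `L`. -/
def tubeBoundary (L : Set E3) (R : ℝ) : Set E3 := {x ∈ ball3 | hDistToSet x L = R}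

/-- A thin component: a horoball or an equidistant tube (of radius at least `R₀`). -/
def ThinR (R₀ : ℝ) (T : Set E3) : Prop :=
  Horoball T ∨ ∃ L R, IsGeodesicLine L ∧ R₀ ≤ R ∧ T = tube L R

/-- Length of a path `γ` on `[a,b]`, measured with respect to a distance function `d`,
as the supremum of the `d`-lengths of inscribed polygonal approximations. -/
def pathELength {α : Type*} (d : α → α → ℝ) (γ : ℝ → α) (a b : ℝ) : ℝ≥0∞ :=
  ⨆ p : {q : ℕ × (ℕ → ℝ) // Monotone q.2 ∧ q.2 0 = a ∧ q.2 q.1 = b ∧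
      ∀ i, q.2 i ∈ Set.Icc a b},
    ∑ i ∈ Finset.range p.1.1, ENNReal.ofReal (d (γ (p.1.2 i)) (γ (p.1.2 (i + 1))))

/-- The intrinsic (induced path) distance between `x` and `y` inside the set `S`,
with respect to the distance function `d`. -/
def intrinsicDist {α : Type*} [TopologicalSpace α] (d : α → α → ℝ) (S : Set α)
    (x y : α) : ℝ≥0∞ :=
  ⨅ γ : {γ : ℝ → α // ContinuousOn γ (Set.Icc 0 1) ∧ γ 0 = x ∧ γ 1 = y ∧
      ∀ t ∈ Set.Icc (0 : ℝ) 1, γ t ∈ S},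
    pathELength d γ.1 0 1

/-- A bijective self-map of the ball preserving the hyperbolic metric. -/
def IsHIsom (A : E3 → E3) : Prop :=
  Set.BijOn A ball3 ball3 ∧ ∀ x ∈ ball3, ∀ y ∈ ball3, hDist (A x) (A y) = hDist x y

/-- An action of a group by hyperbolic isometries of the ball model. -/
def IsIsomAction {Γ : Type*} [Group Γ] (ρ : Γ → E3 → E3) : Prop :=
  (∀ g, IsHIsom (ρ g)) ∧ (∀ x, ρ 1 x = x) ∧ ∀ g h x, ρ (g * h) x = ρ g (ρ h x)

/-- Word length with respect to a (symmetrized) generating set `S`. -/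
def wordLength {Γ : Type*} [Group Γ] (S : Set Γ) (g : Γ) : ℕ :=
  sInf {n | ∃ l : List Γ, l.length = n ∧ (∀ x ∈ l, x ∈ S ∨ x⁻¹ ∈ S) ∧ l.prod = g}

/-- The limit set: accumulation points on the sphere at infinity of the orbit of `O`. -/
def limitSet {Γ : Type*} [Group Γ] (ρ : Γ → E3 → E3) (O : E3) : Set E3 :=
  {ξ | ‖ξ‖ = 1 ∧ ∃ u : ℕ → Γ, Tendsto (fun n => ρ (u n) O) atTop (nhds ξ)}

/-- Hyperbolic convexity. -/
def hConvex (C : Set E3) : Prop := ∀ x ∈ C, ∀ y ∈ C, hSeg x y ⊆ C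

/-- The hyperbolic convex hull (in the ball) of a subset `Λ` of the sphere at infinity. -/
def limitHull (Λ : Set E3) : Set E3 :=
  (⋂₀ {C | C ⊆ ball3 ∧ hConvex C ∧ Λ ⊆ closure C}) ∩ ball3

/-- Convex cocompactness: the orbit of `O` is cobounded in the convex hull of the
limit set (i.e. the quotient of the convex core is compact). -/
def ConvexCocompact {Γ : Type*} [Group Γ] (ρ : Γ → E3 → E3) (O : E3) : Prop :=
  ∃ D : ℝ, ∀ x ∈ limitHull (limitSet ρ O), ∃ g : Γ, hDist x (ρ g O) ≤ D

/-- `g` acts as a parabolic isometry: no fixed point in the ball, and zero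
infimal displacement. -/
def IsParabolicIsom (A : E3 → E3) : Prop :=
  (∀ x ∈ ball3, A x ≠ x) ∧ sInf {d | ∃ x ∈ ball3, d = hDist x (A x)} = 0

/-- Geometric finiteness, phrased via a Γ-invariant family of disjoint horoballs whose
complement in the convex core is cobounded for the orbit of `O`. -/
def GeomFiniteBall {Γ : Type*} [Group Γ] (ρ : Γ → E3 → E3) (O : E3) : Prop :=
  ∃ 𝓗 : Set (Set E3),
    (∀ H ∈ 𝓗, Horoball H) ∧
    (∀ H ∈ 𝓗, ∀ H' ∈ 𝓗, H ≠ H' → Disjoint H H') ∧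
    (∀ g : Γ, ∀ H ∈ 𝓗, (ρ g) '' H ∈ 𝓗) ∧
    ∃ D : ℝ, ∀ x ∈ limitHull (limitSet ρ O) \ ⋃₀ 𝓗, ∃ g : Γ, hDist x (ρ g O) ≤ D


namespace Stmt7Aux

open Real

/-- Minkowski space ℝ^{1,3} as ℝ × E3. -/
abbrev M := ℝ × E3

/-- The Minkowski bilinear form. -/
def B (X Y : M) : ℝ := X.1 * Y.1 - inner ℝ X.2 Y.2

lemma B_symm (X Y : M) : B X Y = B Y X := by
  simp only [B, real_inner_comm, mul_comm]

lemma B_add_left (X Y Z : M) : B (X + Y) Z = B X Z + B Y Z := by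
  simp only [B, Prod.fst_add, Prod.snd_add, inner_add_left]; ring

lemma B_sub_left (X Y Z : M) : B (X - Y) Z = B X Z - B Y Z := by
  simp only [B, Prod.fst_sub, Prod.snd_sub, inner_sub_left]; ring

lemma B_smul_left (r : ℝ) (X Z : M) : B (r • X) Z = r * B X Z := by
  simp only [B, Prod.smul_fst, Prod.smul_snd, real_inner_smul_left, smul_eq_mul]; ring

lemma B_add_right (X Y Z : M) : B X (Y + Z) = B X Y + B X Z := by
  rw [B_symm, B_add_left, B_symm Y X, B_symm Z X]

lemma B_sub_right (X Y Z : M) : B X (Y - Z) = B X Y - B X Z := by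
  rw [B_symm, B_sub_left, B_symm Y X, B_symm Z X]

lemma B_smul_right (r : ℝ) (X Z : M) : B X (r • Z) = r * B X Z := by
  rw [B_symm, B_smul_left, B_symm]

/-- The hyperboloid embedding of the ball model. -/
def Phi (x : E3) : M := ((1 + ‖x‖^2)/(1 - ‖x‖^2), (2/(1 - ‖x‖^2)) • x)

lemma ball_denom_pos {x : E3} (hx : x ∈ ball3) : 0 < 1 - ‖x‖^2 := by
  have : ‖x‖ < 1 := by simpa [ball3, Metric.mem_ball, dist_eq_norm] using hx
  nlinarith [norm_nonneg x]

lemma hDist_symm (x y : E3) : hDist x y = hDist y x := by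
  simp [hDist, dist_comm, mul_comm (1 - ‖x‖^2)]

lemma hDist_nonneg (x y : E3) : 0 ≤ hDist x y :=
  mul_nonneg (by norm_num)
    (Real.arsinh_nonneg_iff.mpr (div_nonneg dist_nonneg (Real.sqrt_nonneg _)))

/-- Key identity: the Minkowski product computes cosh of hyperbolic distance. -/
lemma cosh_hDist {x y : E3} (hx : x ∈ ball3) (hy : y ∈ ball3) :
    Real.cosh (hDist x y) = B (Phi x) (Phi y) := by
  have hx' := ball_denom_pos hx
  have hy' := ball_denom_pos hy
  have hprod : 0 < (1 - ‖x‖^2) * (1 - ‖y‖^2) := mul_pos hx' hy'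
  have h1 : Real.cosh (hDist x y)
      = 1 + 2 * (dist x y ^ 2 / ((1 - ‖x‖^2) * (1 - ‖y‖^2))) := by
    rw [hDist, Real.cosh_two_mul, Real.cosh_arsinh, Real.sinh_arsinh,
      Real.sq_sqrt (by positivity), div_pow, Real.sq_sqrt hprod.le]
    ring
  have h2 : dist x y ^ 2 = ‖x‖^2 - 2 * (inner ℝ x y : ℝ) + ‖y‖^2 := by
    rw [dist_eq_norm]; exact norm_sub_sq_real x y
  have h3 : (inner ℝ ((2/(1 - ‖x‖^2)) • x) ((2/(1 - ‖y‖^2)) • y) : ℝ)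
      = (2/(1 - ‖x‖^2)) * ((2/(1 - ‖y‖^2)) * (inner ℝ x y : ℝ)) := by
    rw [real_inner_smul_left, real_inner_smul_right]
  rw [h1, h2]
  simp only [B, Phi]
  rw [h3]
  field_simp
  ring

lemma B_Phi_self {x : E3} (hx : x ∈ ball3) : B (Phi x) (Phi x) = 1 := by
  rw [← cosh_hDist hx hx]
  have : hDist x x = 0 := by simp [hDist]
  simp [this]

/-- A vector Minkowski-orthogonal to a unit timelike vector is spacelike. -/
lemma timelike_perp {A X : M} (hA : B A A = 1) (hX : B X A = 0) : B X X ≤ 0 := by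
  have ha : A.1 ^ 2 = 1 + ‖A.2‖^2 := by
    have := hA; simp only [B, real_inner_self_eq_norm_sq] at this; nlinarith
  have hx1 : X.1 * A.1 = inner ℝ X.2 A.2 := by
    have := hX; simp only [B] at this; linarith
  have hCS : (inner ℝ X.2 A.2 : ℝ)^2 ≤ ‖X.2‖^2 * ‖A.2‖^2 := by
    have h := abs_real_inner_le_norm X.2 A.2
    nlinarith [abs_nonneg (inner ℝ X.2 A.2 : ℝ), sq_abs (inner ℝ X.2 A.2 : ℝ),
      norm_nonneg X.2, norm_nonneg A.2]
  have hkey : X.1^2 * A.1^2 ≤ ‖X.2‖^2 * ‖A.2‖^2 := by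
    rw [← mul_pow, hx1]; exact hCS
  simp only [B, real_inner_self_eq_norm_sq]
  nlinarith [sq_nonneg X.1, norm_nonneg X.2, sq_nonneg (‖X.2‖^2)]

lemma timelike_perp_null {A X : M} (hA : B A A = 1) (hX : B X A = 0)
    (hXX : B X X = 0) : X = 0 := by
  have ha : A.1 ^ 2 = 1 + ‖A.2‖^2 := by
    have := hA; simp only [B, real_inner_self_eq_norm_sq] at this; nlinarith
  have ha0 : A.1 ≠ 0 := by
    intro h; rw [h] at ha; nlinarith [norm_nonneg A.2]
  have hx1 : X.1 * A.1 = inner ℝ X.2 A.2 := by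
    have := hX; simp only [B] at this; linarith
  have hCS : (inner ℝ X.2 A.2 : ℝ)^2 ≤ ‖X.2‖^2 * ‖A.2‖^2 := by
    have h := abs_real_inner_le_norm X.2 A.2
    nlinarith [abs_nonneg (inner ℝ X.2 A.2 : ℝ), sq_abs (inner ℝ X.2 A.2 : ℝ),
      norm_nonneg X.2, norm_nonneg A.2]
  have hkey : X.1^2 * A.1^2 ≤ ‖X.2‖^2 * ‖A.2‖^2 := by
    rw [← mul_pow, hx1]; exact hCS
  have h1 : X.1^2 = ‖X.2‖^2 := by
    have := hXX; simp only [B, real_inner_self_eq_norm_sq] at this; nlinarith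
  have hx2 : X.2 = 0 := by
    by_contra h
    have hn : 0 < ‖X.2‖^2 := by
      have : 0 < ‖X.2‖ := norm_pos_iff.mpr h
      positivity
    nlinarith
  have hx0 : X.1 = 0 := by
    have h' : X.1 * A.1 = 0 := by rw [hx1, hx2]; simp
    rcases mul_eq_zero.mp h' with h | h
    · exact h
    · exact absurd h ha0
  ext
  · exact hx0
  · rw [hx2]; rfl

end Stmt7Aux
namespace Stmt7Aux

open Real

lemma sinh_nonneg' {x : ℝ} (hx : 0 ≤ x) : 0 ≤ Real.sinh x := Real.sinh_nonneg_iff.mpr hx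

lemma half_exp_le_cosh (x : ℝ) : exp x / 2 ≤ Real.cosh x := by
  rw [Real.cosh_eq]; nlinarith [Real.exp_pos (-x)]

lemma cosh_le_exp {x : ℝ} (hx : 0 ≤ x) : Real.cosh x ≤ exp x := by
  rw [Real.cosh_eq]
  nlinarith [Real.exp_le_exp.mpr (neg_le_self hx)]

lemma sinh_le_half_exp (x : ℝ) : Real.sinh x ≤ exp x / 2 := by
  rw [Real.sinh_eq]; nlinarith [Real.exp_pos (-x)]

lemma exp_le_sinh_add_one {s : ℝ} (hs : 0 ≤ s) : exp s ≤ Real.sinh (s + 1) := by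
  rw [Real.sinh_eq]
  have h1 : exp (s + 1) = exp s * exp 1 := Real.exp_add s 1
  have h2 : exp (-(s + 1)) = (exp s * exp 1)⁻¹ := by
    rw [Real.exp_neg, Real.exp_add]
  have h3 : (2.7182818283 : ℝ) < exp 1 := Real.exp_one_gt_d9
  have h4 : (1 : ℝ) ≤ exp s := Real.one_le_exp hs
  have h5 : (0:ℝ) < exp s * exp 1 := by positivity
  rw [h1, h2, le_div_iff₀ (by norm_num : (0:ℝ) < 2)]
  have h6 : (exp s * exp 1)⁻¹ * (exp s * exp 1) = 1 := inv_mul_cancel₀ h5.ne'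
  have h7 : (exp s * exp 1)⁻¹ ≤ 1 := by
    rw [inv_le_one_iff₀]; right; nlinarith
  nlinarith [Real.exp_pos s, inv_pos.mpr h5, mul_pos (inv_pos.mpr h5) h5]

lemma exp_mul_sinh_le {a b : ℝ} (ha : 0 ≤ a) : exp a * Real.sinh b ≤ Real.sinh (a + b) := by
  rw [Real.sinh_add, ← Real.cosh_add_sinh]
  nlinarith [sinh_nonneg' ha, Real.exp_pos (-b), Real.cosh_sub_sinh b]

lemma sinh_add_le_aux {a b : ℝ} (ha : 0 ≤ a) (hab : a ≤ b) :
    Real.sinh (a + b) ≤ 2 * exp a * (Real.sinh a + Real.sinh b) := by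
  have hb : 0 ≤ b := ha.trans hab
  have hA : (1:ℝ) ≤ exp a := Real.one_le_exp ha
  have hAB : exp a ≤ exp b := Real.exp_le_exp.mpr hab
  have hBpos : (0:ℝ) < exp b := Real.exp_pos b
  have hApos : (0:ℝ) < exp a := Real.exp_pos a
  have ea : exp (-a) = (exp a)⁻¹ := Real.exp_neg a
  have eb : exp (-b) = (exp b)⁻¹ := Real.exp_neg b
  have eab : exp (-(a+b)) = (exp a * exp b)⁻¹ := by rw [Real.exp_neg, Real.exp_add]
  rw [Real.sinh_eq, Real.sinh_eq, Real.sinh_eq, Real.exp_add, ea, eb, eab]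
  rw [div_le_iff₀ (by norm_num : (0:ℝ) < 2)]
  have e1 : (exp a)⁻¹ * exp a = 1 := inv_mul_cancel₀ hApos.ne'
  have e2 : (exp b)⁻¹ * exp b = 1 := inv_mul_cancel₀ hBpos.ne'
  have e3 : (exp a * exp b)⁻¹ * (exp a * exp b) = 1 := by
    apply inv_mul_cancel₀; positivity
  have e4 : (0:ℝ) < (exp a * exp b)⁻¹ := by positivity
  nlinarith [mul_pos hApos hBpos, sq_nonneg (exp a * exp b - 1),
    mul_le_mul_of_nonneg_left hAB hApos.le, inv_pos.mpr hApos, inv_pos.mpr hBpos]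

lemma sinh_add_le_two_exp_min {a b : ℝ} (ha : 0 ≤ a) (hb : 0 ≤ b) :
    Real.sinh (a + b) ≤ 2 * exp (min a b) * (Real.sinh a + Real.sinh b) := by
  rcases le_total a b with h | h
  · rw [min_eq_left h]; exact sinh_add_le_aux ha h
  · rw [min_eq_right h, add_comm a b]
    have := sinh_add_le_aux hb h
    linarith

lemma exp_div_three_le_sinh {a : ℝ} (ha : 1 ≤ a) : exp a / 3 ≤ Real.sinh a := by
  have hA : exp 1 ≤ exp a := Real.exp_le_exp.mpr ha
  have h3 : (2.7182818283 : ℝ) < exp 1 := Real.exp_one_gt_d9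
  have hApos : (0:ℝ) < exp a := Real.exp_pos a
  rw [Real.sinh_eq, Real.exp_neg]
  have e1 : (exp a)⁻¹ * exp a = 1 := inv_mul_cancel₀ hApos.ne'
  have e2 : (0:ℝ) < (exp a)⁻¹ := by positivity
  nlinarith

/-- From cosh h ≤ cosh t with both nonneg, conclude h ≤ t. -/
lemma le_of_cosh_le {h t : ℝ} (hh : 0 ≤ h) (ht : 0 ≤ t)
    (hc : Real.cosh h ≤ Real.cosh t) : h ≤ t := by
  have := Real.cosh_le_cosh.mp hc
  rwa [abs_of_nonneg hh, abs_of_nonneg ht] at this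

end Stmt7Aux
namespace Stmt7Aux

open Real

noncomputable section

/-- First frame vector of a geodesic. -/
def Ag (γ : ℝ → E3) : M := Phi (γ 0)

/-- Second frame vector of a geodesic. -/
def Vg (γ : ℝ → E3) : M := (Real.sinh 1)⁻¹ • (Phi (γ 1) - Real.cosh 1 • Phi (γ 0))

def pg (γ : ℝ → E3) (x : E3) : ℝ := B (Phi x) (Ag γ)
def rg (γ : ℝ → E3) (x : E3) : ℝ := -B (Phi x) (Vg γ)
def ng (γ : ℝ → E3) (x : E3) : M := Phi x - pg γ x • Ag γ - rg γ x • Vg γ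
def Kg (γ : ℝ → E3) (x : E3) : ℝ := Real.sqrt (pg γ x ^ 2 - rg γ x ^ 2)
def Sg (γ : ℝ → E3) (x : E3) : ℝ := Real.sqrt (pg γ x ^ 2 - rg γ x ^ 2 - 1)
def taug (γ : ℝ → E3) (x : E3) : ℝ := Real.arsinh (rg γ x / Kg γ x)

lemma B_Vg_right (γ : ℝ → E3) (X : M) :
    B X (Vg γ) = (Real.sinh 1)⁻¹ * (B X (Phi (γ 1)) - Real.cosh 1 * B X (Phi (γ 0))) := by
  simp only [Vg, B_smul_right, B_sub_right, B_smul_right]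

variable {γ : ℝ → E3} (hγb : ∀ t, γ t ∈ ball3)
  (hγd : ∀ s t, hDist (γ s) (γ t) = |s - t|)

section WithGeodesic
include hγb hγd

lemma Bgg (s t : ℝ) : B (Phi (γ s)) (Phi (γ t)) = Real.cosh (s - t) := by
  rw [← cosh_hDist (hγb s) (hγb t), hγd s t, Real.cosh_abs]

lemma hBtA (t : ℝ) : B (Phi (γ t)) (Ag γ) = Real.cosh t := by
  have := Bgg hγb hγd t 0; simpa [Ag] using this

lemma hAA : B (Ag γ) (Ag γ) = 1 := by simpa [Ag] using Bgg hγb hγd 0 0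

lemma hgV (t : ℝ) : B (Phi (γ t)) (Vg γ) = -Real.sinh t := by
  have hs : Real.sinh 1 ≠ 0 := by
    have : (0:ℝ) < Real.sinh 1 := Real.sinh_pos_iff.mpr one_pos
    exact this.ne'
  rw [B_Vg_right, Bgg hγb hγd t 1, Bgg hγb hγd t 0, Real.cosh_sub]
  field_simp
  ring_nf

lemma hAV : B (Ag γ) (Vg γ) = 0 := by
  have := hgV hγb hγd 0; simpa [Ag] using this

lemma hVV : B (Vg γ) (Vg γ) = -1 := by
  have hs : Real.sinh 1 ≠ 0 := by
    have : (0:ℝ) < Real.sinh 1 := Real.sinh_pos_iff.mpr one_pos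
    exact this.ne'
  rw [B_Vg_right, B_symm (Vg γ) (Phi (γ 1)), hgV hγb hγd 1,
    B_symm (Vg γ) (Phi (γ 0)), hgV hγb hγd 0]
  rw [Real.sinh_zero]
  field_simp
  ring

/-- The fundamental structure theorem: a unit-speed geodesic is a cosh-sinh line. -/
lemma hg (t : ℝ) : Phi (γ t) = Real.cosh t • Ag γ + Real.sinh t • Vg γ := by
  have vtt : B (Phi (γ t)) (Phi (γ t)) = 1 := B_Phi_self (hγb t)
  have vtA : B (Phi (γ t)) (Ag γ) = Real.cosh t := hBtA hγb hγd t
  have vAt : B (Ag γ) (Phi (γ t)) = Real.cosh t := by rw [B_symm]; exact vtA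
  have vtV : B (Phi (γ t)) (Vg γ) = -Real.sinh t := hgV hγb hγd t
  have vVt : B (Vg γ) (Phi (γ t)) = -Real.sinh t := by rw [B_symm]; exact vtV
  have vAA : B (Ag γ) (Ag γ) = 1 := hAA hγb hγd
  have vAV : B (Ag γ) (Vg γ) = 0 := hAV hγb hγd
  have vVA : B (Vg γ) (Ag γ) = 0 := by rw [B_symm]; exact vAV
  have vVV : B (Vg γ) (Vg γ) = -1 := hVV hγb hγd
  set h : M := Phi (γ t) - (Real.cosh t • Ag γ + Real.sinh t • Vg γ) with hdef
  have hA0 : B h (Ag γ) = 0 := by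
    simp only [hdef, B_sub_left, B_add_left, B_smul_left, vtA, vAA, vVA]
    ring
  have hh0 : B h h = 0 := by
    simp only [hdef, B_sub_left, B_sub_right, B_add_left, B_add_right,
      B_smul_left, B_smul_right, vtt, vtA, vAt, vtV, vVt, vAA, vAV, vVA, vVV]
    nlinarith [Real.cosh_sq' t]
  have hz := timelike_perp_null (hAA hγb hγd) hA0 hh0
  rw [hdef] at hz
  exact sub_eq_zero.mp hz

/-- Evaluation of the Minkowski product against points of the geodesic. -/
lemma B_Phi_g (x : E3) (t : ℝ) :
    B (Phi x) (Phi (γ t)) = pg γ x * Real.cosh t - rg γ x * Real.sinh t := by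
  rw [hg hγb hγd t, B_add_right, B_smul_right, B_smul_right]
  simp only [pg, rg]
  ring

lemma ng_perp_A (x : E3) : B (ng γ x) (Ag γ) = 0 := by
  simp only [ng, B_sub_left, B_smul_left, hAA hγb hγd,
    B_symm (Vg γ) (Ag γ), hAV hγb hγd]
  simp [pg]

lemma ng_perp_V (x : E3) : B (ng γ x) (Vg γ) = 0 := by
  simp only [ng, B_sub_left, B_smul_left, hVV hγb hγd, hAV hγb hγd]
  simp [rg]

lemma one_le_pg {x : E3} (hx : x ∈ ball3) : 1 ≤ pg γ x := by
  have : pg γ x = Real.cosh (hDist x (γ 0)) := (cosh_hDist hx (hγb 0)).symm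
  rw [this]; exact Real.one_le_cosh _

lemma Bnn_self {x : E3} (hx : x ∈ ball3) :
    B (ng γ x) (ng γ x) = 1 - (pg γ x ^ 2 - rg γ x ^ 2) := by
  have vAA : B (Ag γ) (Ag γ) = 1 := hAA hγb hγd
  have vAV : B (Ag γ) (Vg γ) = 0 := hAV hγb hγd
  have vVA : B (Vg γ) (Ag γ) = 0 := by rw [B_symm]; exact vAV
  have vVV : B (Vg γ) (Vg γ) = -1 := hVV hγb hγd
  have vxx : B (Phi x) (Phi x) = 1 := B_Phi_self hx
  have vxA : B (Phi x) (Ag γ) = pg γ x := rfl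
  have vAx : B (Ag γ) (Phi x) = pg γ x := by rw [B_symm]; exact vxA
  have vxV : B (Phi x) (Vg γ) = -rg γ x := by simp [rg]
  have vVx : B (Vg γ) (Phi x) = -rg γ x := by rw [B_symm]; exact vxV
  simp only [ng, B_sub_left, B_sub_right, B_smul_left, B_smul_right,
    vxx, vxA, vAx, vxV, vVx, vAA, vAV, vVA, vVV]
  ring

lemma one_le_Ksq {x : E3} (hx : x ∈ ball3) : 1 ≤ pg γ x ^ 2 - rg γ x ^ 2 := by
  have h := timelike_perp (hAA hγb hγd) (ng_perp_A hγb hγd x)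
  rw [Bnn_self hγb hγd hx] at h
  linarith

lemma Kg_one_le {x : E3} (hx : x ∈ ball3) : 1 ≤ Kg γ x := by
  rw [Kg, show (1:ℝ) = Real.sqrt 1 by simp]
  exact Real.sqrt_le_sqrt (one_le_Ksq hγb hγd hx)

lemma Kg_sq {x : E3} (hx : x ∈ ball3) : Kg γ x ^ 2 = pg γ x ^ 2 - rg γ x ^ 2 :=
  Real.sq_sqrt (by linarith [one_le_Ksq hγb hγd hx])

lemma Sg_nonneg (x : E3) : 0 ≤ Sg γ x := Real.sqrt_nonneg _

lemma Sg_sq {x : E3} (hx : x ∈ ball3) : Sg γ x ^ 2 = Kg γ x ^ 2 - 1 := by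
  rw [Sg, Real.sq_sqrt (by linarith [one_le_Ksq hγb hγd hx]), Kg_sq hγb hγd hx]

lemma Bnn_self_eq {x : E3} (hx : x ∈ ball3) :
    B (ng γ x) (ng γ x) = -(Sg γ x ^ 2) := by
  rw [Bnn_self hγb hγd hx, Sg_sq hγb hγd hx, Kg_sq hγb hγd hx]; ring

lemma Kg_cosh_taug {x : E3} (hx : x ∈ ball3) :
    Kg γ x * Real.cosh (taug γ x) = pg γ x := by
  have hK1 : 1 ≤ Kg γ x := Kg_one_le hγb hγd hx
  have hKpos : (0:ℝ) < Kg γ x := by linarith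
  rw [taug, Real.cosh_arsinh]
  rw [show Kg γ x * Real.sqrt (1 + (rg γ x / Kg γ x)^2)
      = Real.sqrt (Kg γ x ^2 * (1 + (rg γ x / Kg γ x)^2)) by
    rw [Real.sqrt_mul (by positivity), Real.sqrt_sq hKpos.le]]
  have : Kg γ x ^2 * (1 + (rg γ x / Kg γ x)^2) = Kg γ x ^2 + rg γ x ^2 := by
    field_simp
  rw [this, Kg_sq hγb hγd hx]
  have h1 : 1 ≤ pg γ x := one_le_pg hγb hγd hx
  rw [show pg γ x ^2 - rg γ x ^2 + rg γ x ^2 = pg γ x ^2 by ring,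
    Real.sqrt_sq (by linarith)]

lemma Kg_sinh_taug {x : E3} (hx : x ∈ ball3) :
    Kg γ x * Real.sinh (taug γ x) = rg γ x := by
  have hK1 : 1 ≤ Kg γ x := Kg_one_le hγb hγd hx
  rw [taug, Real.sinh_arsinh]
  field_simp

/-- The distance from a point to a geodesic point, in normal form. -/
lemma B_Phi_g_K {x : E3} (hx : x ∈ ball3) (t : ℝ) :
    B (Phi x) (Phi (γ t)) = Kg γ x * Real.cosh (t - taug γ x) := by
  rw [B_Phi_g hγb hγd x t, Real.cosh_sub, ← Kg_cosh_taug hγb hγd hx,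
    ← Kg_sinh_taug hγb hγd hx]
  ring

/-- The master formula: decomposition of distances. -/
lemma master {x y : E3} (hx : x ∈ ball3) (hy : y ∈ ball3) :
    Real.cosh (hDist x y)
      = Kg γ x * Kg γ y * Real.cosh (taug γ x - taug γ y) + B (ng γ x) (ng γ y) := by
  have hdec : ∀ z : E3, Phi z = pg γ z • Ag γ + rg γ z • Vg γ + ng γ z := by
    intro z; simp only [ng]; abel
  have vAA : B (Ag γ) (Ag γ) = 1 := hAA hγb hγd
  have vAV : B (Ag γ) (Vg γ) = 0 := hAV hγb hγd
  have vVA : B (Vg γ) (Ag γ) = 0 := by rw [B_symm]; exact vAV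
  have vVV : B (Vg γ) (Vg γ) = -1 := hVV hγb hγd
  have vAn : B (Ag γ) (ng γ y) = 0 := by rw [B_symm]; exact ng_perp_A hγb hγd y
  have vVn : B (Vg γ) (ng γ y) = 0 := by rw [B_symm]; exact ng_perp_V hγb hγd y
  have vnA : B (ng γ x) (Ag γ) = 0 := ng_perp_A hγb hγd x
  have vnV : B (ng γ x) (Vg γ) = 0 := ng_perp_V hγb hγd x
  rw [cosh_hDist hx hy]
  conv_lhs => rw [hdec x, hdec y]
  simp only [B_add_left, B_add_right, B_smul_left, B_smul_right,
    vAA, vAV, vVA, vVV, vAn, vVn, vnA, vnV]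
  rw [Real.cosh_sub, ← Kg_cosh_taug hγb hγd hx, ← Kg_sinh_taug hγb hγd hx,
    ← Kg_cosh_taug hγb hγd hy, ← Kg_sinh_taug hγb hγd hy]
  ring

/-- Cauchy–Schwarz for the spacelike components. -/
lemma ng_CS {x y : E3} (hx : x ∈ ball3) (hy : y ∈ ball3) :
    |B (ng γ x) (ng γ y)| ≤ Sg γ x * Sg γ y := by
  have key : ∀ s : ℝ, 0 ≤ (-(B (ng γ y) (ng γ y))) * (s * s)
      + (-(2 * B (ng γ x) (ng γ y))) * s + (-(B (ng γ x) (ng γ x))) := by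
    intro s
    have hperp : B (ng γ x + s • ng γ y) (Ag γ) = 0 := by
      rw [B_add_left, B_smul_left, ng_perp_A hγb hγd, ng_perp_A hγb hγd]
      ring
    have := timelike_perp (hAA hγb hγd) hperp
    simp only [B_add_left, B_add_right, B_smul_left, B_smul_right] at this
    have hsymm : B (ng γ y) (ng γ x) = B (ng γ x) (ng γ y) := B_symm _ _
    rw [hsymm] at this
    nlinarith
  have hd := discrim_le_zero key
  rw [discrim] at hd
  have hx2 := Bnn_self_eq hγb hγd hx
  have hy2 := Bnn_self_eq hγb hγd hy
  have h1 : (B (ng γ x) (ng γ y))^2 ≤ (Sg γ x * Sg γ y)^2 := by nlinarith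
  have h2 : 0 ≤ Sg γ x * Sg γ y := mul_nonneg (Sg_nonneg hγb hγd x) (Sg_nonneg hγb hγd y)
  rcases abs_le_of_sq_le_sq' h1 h2 with ⟨hl, hr⟩
  exact abs_le.mpr ⟨by linarith, hr⟩

end WithGeodesic

end

end Stmt7Aux
namespace Stmt7Aux

open Real

noncomputable section

variable {γ : ℝ → E3} (hγb : ∀ t, γ t ∈ ball3)
  (hγd : ∀ s t, hDist (γ s) (γ t) = |s - t|)

section WithGeodesic2
include hγb hγd

lemma cosh_Ddist {x : E3} (hx : x ∈ ball3) :
    Real.cosh (hDist x (γ (taug γ x))) = Kg γ x := by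
  rw [cosh_hDist hx (hγb _), B_Phi_g_K hγb hγd hx]
  simp

lemma sinh_Ddist {x : E3} (hx : x ∈ ball3) :
    Real.sinh (hDist x (γ (taug γ x))) = Sg γ x := by
  have h1 : Real.sinh (hDist x (γ (taug γ x))) ^ 2 = Sg γ x ^ 2 := by
    have := Real.cosh_sq' (hDist x (γ (taug γ x)))
    rw [cosh_Ddist hγb hγd hx] at this
    rw [Sg_sq hγb hγd hx]
    linarith
  have h2 : 0 ≤ Real.sinh (hDist x (γ (taug γ x))) := sinh_nonneg' (hDist_nonneg _ _)
  rw [← Real.sqrt_sq h2, h1, Real.sqrt_sq (Sg_nonneg hγb hγd x)]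

lemma Ddist_le {x : E3} (hx : x ∈ ball3) (t : ℝ) :
    hDist x (γ (taug γ x)) ≤ hDist x (γ t) := by
  apply le_of_cosh_le (hDist_nonneg _ _) (hDist_nonneg _ _)
  rw [cosh_Ddist hγb hγd hx, cosh_hDist hx (hγb t), B_Phi_g_K hγb hγd hx]
  nlinarith [Kg_one_le hγb hγd hx, Real.one_le_cosh (t - taug γ x)]

lemma hDistToSet_eq {x : E3} (hx : x ∈ ball3) :
    hDistToSet x (Set.range γ) = hDist x (γ (taug γ x)) := by
  have himg : (hDist x) '' Set.range γ = Set.range (fun t => hDist x (γ t)) := by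
    rw [← Set.range_comp]; rfl
  rw [hDistToSet, himg]
  apply le_antisymm
  · apply csInf_le
    · exact ⟨0, fun y ⟨t, ht⟩ => ht ▸ hDist_nonneg _ _⟩
    · exact ⟨taug γ x, rfl⟩
  · apply le_csInf (Set.range_nonempty _)
    rintro y ⟨t, rfl⟩
    exact Ddist_le hγb hγd hx t

end WithGeodesic2

/-- Continuity of the basic quantities on the ball. -/
lemma pg_formula (γ : ℝ → E3) (x : E3) :
    pg γ x = (1 + ‖x‖^2)/(1 - ‖x‖^2) * (Ag γ).1
      - (2/(1 - ‖x‖^2)) * (inner ℝ x (Ag γ).2 : ℝ) := by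
  simp [pg, B, Phi, real_inner_smul_left, Finset.mul_sum, mul_assoc]

lemma rg_formula (γ : ℝ → E3) (x : E3) :
    rg γ x = -((1 + ‖x‖^2)/(1 - ‖x‖^2) * (Vg γ).1
      - (2/(1 - ‖x‖^2)) * (inner ℝ x (Vg γ).2 : ℝ)) := by
  simp [rg, B, Phi, real_inner_smul_left, Finset.mul_sum, mul_assoc]

lemma continuousOn_pg (γ : ℝ → E3) : ContinuousOn (pg γ) ball3 := by
  have : ContinuousOn (fun x : E3 => (1 + ‖x‖^2)/(1 - ‖x‖^2) * (Ag γ).1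
      - (2/(1 - ‖x‖^2)) * (inner ℝ x (Ag γ).2 : ℝ)) ball3 := by
    apply ContinuousOn.sub
    · apply ContinuousOn.mul _ continuousOn_const
      apply ContinuousOn.div
      · exact (continuous_const.add (continuous_norm.pow 2)).continuousOn
      · exact (continuous_const.sub (continuous_norm.pow 2)).continuousOn
      · exact fun x hx => (ball_denom_pos hx).ne'
    · apply ContinuousOn.mul
      · apply ContinuousOn.div continuousOn_const
          (continuous_const.sub (continuous_norm.pow 2)).continuousOn
          fun x hx => (ball_denom_pos hx).ne'
      · exact (continuous_id.inner continuous_const).continuousOn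
  exact this.congr fun x _ => pg_formula γ x

lemma continuousOn_rg (γ : ℝ → E3) : ContinuousOn (rg γ) ball3 := by
  have : ContinuousOn (fun x : E3 => -((1 + ‖x‖^2)/(1 - ‖x‖^2) * (Vg γ).1
      - (2/(1 - ‖x‖^2)) * (inner ℝ x (Vg γ).2 : ℝ))) ball3 := by
    apply ContinuousOn.neg
    apply ContinuousOn.sub
    · apply ContinuousOn.mul _ continuousOn_const
      apply ContinuousOn.div
      · exact (continuous_const.add (continuous_norm.pow 2)).continuousOn
      · exact (continuous_const.sub (continuous_norm.pow 2)).continuousOn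
      · exact fun x hx => (ball_denom_pos hx).ne'
    · apply ContinuousOn.mul
      · apply ContinuousOn.div continuousOn_const
          (continuous_const.sub (continuous_norm.pow 2)).continuousOn
          fun x hx => (ball_denom_pos hx).ne'
      · exact (continuous_id.inner continuous_const).continuousOn
  exact this.congr fun x _ => rg_formula γ x

lemma continuousOn_Kg (γ : ℝ → E3) : ContinuousOn (Kg γ) ball3 := by
  apply Real.continuous_sqrt.comp_continuousOn
  exact ((continuousOn_pg γ).pow 2).sub ((continuousOn_rg γ).pow 2)

lemma continuousOn_taug {γ : ℝ → E3} (hγb : ∀ t, γ t ∈ ball3)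
    (hγd : ∀ s t, hDist (γ s) (γ t) = |s - t|) :
    ContinuousOn (taug γ) ball3 := by
  apply Real.continuous_arsinh.comp_continuousOn
  apply ContinuousOn.div (continuousOn_rg γ) (continuousOn_Kg γ)
  intro x hx
  have := Kg_one_le hγb hγd hx
  linarith

/-- Betweenness decomposition: a point on a geodesic segment is a hyperboloid
combination of the endpoints. -/
lemma seg_decomp {P₁ P₂ z : E3} (h1 : P₁ ∈ ball3) (h2 : P₂ ∈ ball3)
    (hz : z ∈ ball3) (hsum : hDist P₁ z + hDist z P₂ = hDist P₁ P₂)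
    (hdpos : 0 < hDist P₁ P₂) :
    Phi z = (Real.sinh (hDist z P₂) / Real.sinh (hDist P₁ P₂)) • Phi P₁
      + (Real.sinh (hDist P₁ z) / Real.sinh (hDist P₁ P₂)) • Phi P₂ := by
  set a := hDist P₁ z with ha
  set b := hDist z P₂ with hb
  set d := hDist P₁ P₂ with hd
  have ha0 : 0 ≤ a := hDist_nonneg _ _
  have hb0 : 0 ≤ b := hDist_nonneg _ _
  have hsd : 0 < Real.sinh d := Real.sinh_pos_iff.mpr hdpos
  set lam := Real.sinh b / Real.sinh d with hlam
  set mu := Real.sinh a / Real.sinh d with hmu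
  have v11 : B (Phi P₁) (Phi P₁) = 1 := B_Phi_self h1
  have v22 : B (Phi P₂) (Phi P₂) = 1 := B_Phi_self h2
  have vzz : B (Phi z) (Phi z) = 1 := B_Phi_self hz
  have v12 : B (Phi P₁) (Phi P₂) = Real.cosh d := (cosh_hDist h1 h2).symm
  have v21 : B (Phi P₂) (Phi P₁) = Real.cosh d := by rw [B_symm]; exact v12
  have vz1 : B (Phi z) (Phi P₁) = Real.cosh a := by
    rw [B_symm, ← cosh_hDist h1 hz]
  have v1z : B (Phi P₁) (Phi z) = Real.cosh a := by rw [B_symm]; exact vz1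
  have vz2 : B (Phi z) (Phi P₂) = Real.cosh b := by rw [← cosh_hDist hz h2]
  have v2z : B (Phi P₂) (Phi z) = Real.cosh b := by rw [B_symm]; exact vz2
  set h : M := Phi z - lam • Phi P₁ - mu • Phi P₂ with hdef
  have e1 : Real.sinh d * Real.cosh a - Real.sinh b - Real.sinh a * Real.cosh d = 0 := by
    rw [← hsum, Real.sinh_add, Real.cosh_add]
    linear_combination Real.sinh b * Real.cosh_sq' a
  have e2 : Real.sinh d * Real.cosh b - Real.sinh a - Real.sinh b * Real.cosh d = 0 := by
    rw [← hsum, Real.sinh_add, Real.cosh_add]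
    linear_combination Real.sinh a * Real.cosh_sq' b
  have e3 : Real.sinh d - Real.sinh b * Real.cosh a - Real.sinh a * Real.cosh b = 0 := by
    rw [← hsum, Real.sinh_add]
    ring
  have hB1 : B h (Phi P₁) = 0 := by
    simp only [hdef, B_sub_left, B_smul_left, vz1, v11, v21]
    rw [hlam, hmu]
    field_simp
    linear_combination e1
  have hB2 : B h (Phi P₂) = 0 := by
    simp only [hdef, B_sub_left, B_smul_left, vz2, v12, v22]
    rw [hlam, hmu]
    field_simp
    linear_combination e2
  have hBz : B h (Phi z) = 0 := by
    simp only [hdef, B_sub_left, B_smul_left, vzz, v1z, v2z]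
    rw [hlam, hmu]
    field_simp
    linear_combination e3
  have hhh : B h h = 0 := by
    have : B h h = B h (Phi z) - lam * B h (Phi P₁) - mu * B h (Phi P₂) := by
      conv_lhs => rw [show (h : M) = Phi z - lam • Phi P₁ - mu • Phi P₂ from hdef]
      rw [B_sub_right, B_sub_right, B_smul_right, B_smul_right]
    rw [this, hB1, hB2, hBz]
    ring
  have hz0 := timelike_perp_null v11 hB1 hhh
  rw [hdef] at hz0
  have : Phi z - lam • Phi P₁ - mu • Phi P₂ = 0 := hz0
  have : Phi z = lam • Phi P₁ + mu • Phi P₂ := by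
    rw [sub_sub] at this
    rw [sub_eq_zero] at this
    exact this
  exact this

/-- Degenerate case: coincident points have equal hyperboloid images. -/
lemma zero_dist_Phi {x z : E3} (hx : x ∈ ball3) (hz : z ∈ ball3)
    (h0 : hDist x z = 0) : Phi z = Phi x := by
  have v1 : B (Phi x) (Phi z) = 1 := by
    rw [← cosh_hDist hx hz, h0, Real.cosh_zero]
  have hB1 : B (Phi z - Phi x) (Phi x) = 0 := by
    rw [B_sub_left, B_Phi_self hx, B_symm, v1]
    ring
  have hhh : B (Phi z - Phi x) (Phi z - Phi x) = 0 := by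
    rw [B_sub_left, B_sub_right, B_sub_right, B_Phi_self hx, B_Phi_self hz,
      v1, B_symm (Phi z) (Phi x), v1]
    ring
  have := timelike_perp_null (B_Phi_self hx) hB1 hhh
  exact sub_eq_zero.mp this

end

end Stmt7Aux
namespace Stmt7Aux

open Real

lemma le_of_sq_le_sq'' {s t : ℝ} (hs : 0 ≤ s) (ht : 0 ≤ t) (h : s^2 ≤ t^2) : s ≤ t := by
  nlinarith

lemma four_le_exp_two : (4:ℝ) ≤ Real.exp 2 := by
  have h := Real.exp_one_gt_d9
  have : Real.exp 2 = Real.exp 1 * Real.exp 1 := by rw [← Real.exp_add]; norm_num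
  nlinarith

/-- The basic exponential comparison used throughout. -/
lemma le_add_two_of_exp_le {x y : ℝ} (h : Real.exp x ≤ 4 * Real.exp y) : x ≤ y + 2 := by
  have h2 : Real.exp x ≤ Real.exp (y + 2) := by
    rw [Real.exp_add]
    nlinarith [Real.exp_pos y, four_le_exp_two]
  exact Real.exp_le_exp.mp h2

lemma sqrt_exp_half (x : ℝ) : Real.sqrt (Real.exp x) = Real.exp (x/2) := by
  rw [show Real.exp x = Real.exp (x/2) ^ 2 by rw [sq, ← Real.exp_add]; ring_nf]
  exact Real.sqrt_sq (Real.exp_pos _).le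

end Stmt7Aux

open Stmt7Aux in
set_option maxHeartbeats 1600000 in
/-- Fix `R₀ > 0`. There is `c > 0` such that: if `T` is an equidistant
tube of radius `R ≥ R₀` about a geodesic `L`, the centre `O = 0` is not in the interior
of `T`, the points `P₁, P₂ ∈ ∂T` lie outside the hyperbolic `N`-ball about `O`, and some
path on `∂T` joining them stays outside that ball, then the geodesic segment `[P₁,P₂]`
lies outside the ball of radius `N/4 - c`. -/
theorem stmt7 (R₀ : ℝ) (hR₀ : 0 < R₀) :
    ∃ c : ℝ, 0 < c ∧ ∀ (N R : ℝ) (L : Set E3) (P₁ P₂ : E3),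
      IsGeodesicLine L → R₀ ≤ R →
      (0 : E3) ∉ interior (tube L R) →
      P₁ ∈ tubeBoundary L R → P₂ ∈ tubeBoundary L R →
      N ≤ hDist 0 P₁ → N ≤ hDist 0 P₂ →
      (∃ γ : ℝ → E3, ContinuousOn γ (Set.Icc 0 1) ∧ γ 0 = P₁ ∧ γ 1 = P₂ ∧
        ∀ t ∈ Set.Icc (0 : ℝ) 1, γ t ∈ tubeBoundary L R ∧ N ≤ hDist 0 (γ t)) →
      ∀ z ∈ hSeg P₁ P₂, N / 4 - c ≤ hDist 0 z := by
  refine ⟨10, by norm_num, ?_⟩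
  intro N R L P₁ P₂ hL hRR₀ hO hP₁ hP₂ hN₁ hN₂ hpath z hz
  have hm0 : 0 ≤ hDist 0 z := hDist_nonneg _ _
  by_cases hNs : N ≤ 40
  · linarith only [hm0, hNs]
  push_neg at hNs
  obtain ⟨γ, hγb, hγd, rfl⟩ := hL
  obtain ⟨hP₁b, hP₁d⟩ := hP₁
  obtain ⟨hP₂b, hP₂d⟩ := hP₂
  obtain ⟨hzb, hzseg⟩ := hz
  have h0b : (0:E3) ∈ ball3 := by simp [ball3, Metric.mem_ball]
  have hRpos : 0 < R := lt_of_lt_of_le hR₀ hRR₀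
  have hN0 : (0:ℝ) ≤ N := by linarith only [hNs]
  have tubeKS : ∀ w : E3, w ∈ ball3 → hDistToSet w (Set.range γ) = R →
      Kg γ w = Real.cosh R ∧ Sg γ w = Real.sinh R := by
    intro w hwb hwd
    rw [hDistToSet_eq hγb hγd hwb] at hwd
    exact ⟨by rw [← cosh_Ddist hγb hγd hwb, hwd], by rw [← sinh_Ddist hγb hγd hwb, hwd]⟩
  obtain ⟨hK₁, hS₁⟩ := tubeKS P₁ hP₁b hP₁d
  obtain ⟨hK₂, hS₂⟩ := tubeKS P₂ hP₂b hP₂d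
  have hK0 : Real.cosh R ≤ Kg γ 0 := by
    by_contra hlt
    push_neg at hlt
    apply hO
    have hUopen : IsOpen (ball3 ∩ (Kg γ) ⁻¹' (Set.Iio (Real.cosh R))) :=
      (continuousOn_Kg γ).isOpen_inter_preimage Metric.isOpen_ball isOpen_Iio
    have hUsub : ball3 ∩ (Kg γ) ⁻¹' (Set.Iio (Real.cosh R)) ⊆ tube (Set.range γ) R := by
      rintro x ⟨hxb, hxK⟩
      refine ⟨hxb, ?_⟩
      rw [hDistToSet_eq hγb hγd hxb]
      apply le_of_cosh_le (hDist_nonneg _ _) hRpos.le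
      rw [cosh_Ddist hγb hγd hxb]
      exact le_of_lt hxK
    exact interior_maximal hUsub hUopen ⟨h0b, hlt⟩
  set u := hDist 0 P₁ with hu_def
  set v := hDist 0 P₂ with hv_def
  set m := hDist 0 z with hm_def
  set a := hDist P₁ z with ha_def
  set b := hDist z P₂ with hb_def
  set d := hDist P₁ P₂ with hd_def
  set D := hDist 0 (γ (taug γ 0)) with hD_def
  have hcoshD : Real.cosh D = Kg γ 0 := cosh_Ddist hγb hγd h0b
  have hsinhD : Real.sinh D = Sg γ 0 := sinh_Ddist hγb hγd h0b
  have hD0 : 0 ≤ D := hDist_nonneg _ _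
  have hDR : R ≤ D := by
    apply le_of_cosh_le hRpos.le hD0
    rw [hcoshD]; exact hK0
  have ha0 : 0 ≤ a := hDist_nonneg _ _
  have hb0 : 0 ≤ b := hDist_nonneg _ _
  have hu0 : (0:ℝ) ≤ u := hDist_nonneg _ _
  have hv0 : (0:ℝ) ≤ v := hDist_nonneg _ _
  by_contra hcon
  push_neg at hcon
  rcases eq_or_lt_of_le (show (0:ℝ) ≤ d by rw [← hzseg]; linarith only [ha0, hb0]) with
    hd0 | hdpos
  · rw [← hzseg] at hd0
    have ha' : a = 0 := by linarith only [hd0, ha0, hb0]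
    have hPz : Phi z = Phi P₁ := zero_dist_Phi hP₁b hzb ha'
    have hmu' : Real.cosh m = Real.cosh u := by
      rw [hm_def, hu_def, cosh_hDist h0b hzb, cosh_hDist h0b hP₁b, hPz]
    have hNm : N ≤ m := by
      apply le_of_cosh_le hN0 hm0
      rw [hmu']
      exact Real.cosh_le_cosh.mpr
        (by rw [abs_of_nonneg hN0, abs_of_nonneg hu0]; exact hN₁)
    linarith only [hNm, hcon, hNs]
  have hsd : 0 < Real.sinh d := Real.sinh_pos_iff.mpr hdpos
  set lam := Real.sinh b / Real.sinh d with hlam_def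
  set mu := Real.sinh a / Real.sinh d with hmu_def
  have hlam0 : 0 ≤ lam := div_nonneg (sinh_nonneg' hb0) hsd.le
  have hmu0 : 0 ≤ mu := div_nonneg (sinh_nonneg' ha0) hsd.le
  have hPhiz : Phi z = lam • Phi P₁ + mu • Phi P₂ :=
    seg_decomp hP₁b hP₂b hzb hzseg hdpos
  have hcoshm : Real.cosh m = lam * Real.cosh u + mu * Real.cosh v := by
    rw [hm_def, cosh_hDist h0b hzb, hPhiz, B_add_right, B_smul_right, B_smul_right,
      ← cosh_hDist h0b hP₁b, ← cosh_hDist h0b hP₂b]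
  -- Step A : min a b is large
  set mn := min a b with hmn_def
  have hmn0 : 0 ≤ mn := le_min ha0 hb0
  have hmna : mn ≤ a := min_le_left a b
  have hmnb : mn ≤ b := min_le_right a b
  have hcoshNu : Real.cosh N ≤ Real.cosh u := Real.cosh_le_cosh.mpr
    (by rw [abs_of_nonneg hN0, abs_of_nonneg hu0]; exact hN₁)
  have hcoshNv : Real.cosh N ≤ Real.cosh v := Real.cosh_le_cosh.mpr
    (by rw [abs_of_nonneg hN0, abs_of_nonneg hv0]; exact hN₂)
  have hlammu_lb : Real.exp (-mn) / 2 ≤ lam + mu := by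
    have h1 : Real.sinh d ≤ 2 * Real.exp mn * (Real.sinh a + Real.sinh b) := by
      rw [← hzseg]
      exact sinh_add_le_two_exp_min ha0 hb0
    rw [hlam_def, hmu_def, ← add_div,
      div_le_div_iff₀ (by norm_num : (0:ℝ) < 2) hsd]
    have hemn : Real.exp (-mn) * Real.exp mn = 1 := by
      rw [← Real.exp_add]; simp
    have h2 := mul_le_mul_of_nonneg_left h1 (Real.exp_pos (-mn)).le
    have h3 : Real.exp (-mn) * (2 * Real.exp mn * (Real.sinh a + Real.sinh b))
        = (Real.exp (-mn) * Real.exp mn) * (2 * (Real.sinh a + Real.sinh b)) := by ring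
    rw [h3, hemn] at h2
    linarith only [h2]
  have hstepA : N - mn ≤ m + 2 := by
    apply le_add_two_of_exp_le
    have h1 : Real.exp N / 2 ≤ Real.cosh N := half_exp_le_cosh N
    have h2 : Real.cosh m ≤ Real.exp m := cosh_le_exp hm0
    have e1 := mul_le_mul_of_nonneg_left hcoshNu hlam0
    have e2 := mul_le_mul_of_nonneg_left hcoshNv hmu0
    have h3 : (lam + mu) * Real.cosh N ≤ Real.cosh m := by
      rw [hcoshm]; linarith only [e1, e2]
    have h4 : Real.exp (N - mn) = Real.exp N * Real.exp (-mn) := by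
      rw [← Real.exp_add]; ring_nf
    have h5 : (Real.exp (-mn) / 2) * (Real.exp N / 2) ≤ (lam + mu) * Real.cosh N :=
      mul_le_mul hlammu_lb h1 (by positivity)
        (by linarith only [hlammu_lb, Real.exp_pos (-mn)])
    rw [h4]
    linarith only [h5, h3, h2]
  have hmn_lb : 3*N/4 + 8 ≤ mn := by linarith only [hstepA, hcon, hNs]
  -- Step B : S z is small
  have hnz : ng γ z = lam • ng γ P₁ + mu • ng γ P₂ := by
    have hpz : pg γ z = lam * pg γ P₁ + mu * pg γ P₂ := by
      simp only [pg]; rw [hPhiz, B_add_left, B_smul_left, B_smul_left]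
    have hrz : rg γ z = lam * rg γ P₁ + mu * rg γ P₂ := by
      simp only [rg]; rw [hPhiz, B_add_left, B_smul_left, B_smul_left]; ring
    simp only [ng, hpz, hrz]
    rw [hPhiz]
    module
  have hsR : 0 ≤ Real.sinh R := sinh_nonneg' hRpos.le
  have hSz_le : Sg γ z ≤ (lam + mu) * Real.sinh R := by
    apply le_of_sq_le_sq'' (Sg_nonneg hγb hγd z) (mul_nonneg (add_nonneg hlam0 hmu0) hsR)
    have hBzz : B (ng γ z) (ng γ z) = -(Sg γ z^2) := Bnn_self_eq hγb hγd hzb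
    have hB11 : B (ng γ P₁) (ng γ P₁) = -(Sg γ P₁^2) := Bnn_self_eq hγb hγd hP₁b
    have hB22 : B (ng γ P₂) (ng γ P₂) = -(Sg γ P₂^2) := Bnn_self_eq hγb hγd hP₂b
    have hB12 := (abs_le.mp (ng_CS hγb hγd hP₁b hP₂b)).1
    have hexp : B (ng γ z) (ng γ z)
        = lam^2 * B (ng γ P₁) (ng γ P₁) + 2*lam*mu * B (ng γ P₁) (ng γ P₂)
          + mu^2 * B (ng γ P₂) (ng γ P₂) := by
      rw [hnz]
      simp only [B_add_left, B_add_right, B_smul_left, B_smul_right]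
      rw [B_symm (ng γ P₂) (ng γ P₁)]
      ring
    rw [hS₁] at hB11 hB12
    rw [hS₂] at hB22 hB12
    nlinarith only [hexp, hBzz, hB11, hB22, hB12, hlam0, hmu0, hsR,
      mul_nonneg hlam0 hmu0]
  have hlammu_ub : lam + mu ≤ 2 * Real.exp (-mn) := by
    have hsa : Real.sinh a ≤ Real.exp (-mn) * Real.sinh d := by
      have h1 : Real.exp b * Real.sinh a ≤ Real.sinh d := by
        have h := exp_mul_sinh_le (a := b) (b := a) hb0
        rw [add_comm b a] at h
        rw [← hzseg]; exact h
      have h2 : (1:ℝ) ≤ Real.exp (-mn) * Real.exp b := by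
        rw [← Real.exp_add]
        exact Real.one_le_exp (by linarith only [hmnb])
      have p1 := mul_le_mul_of_nonneg_left h1 (Real.exp_pos (-mn)).le
      have p2 := mul_le_mul_of_nonneg_right h2 (sinh_nonneg' ha0)
      nlinarith only [p1, p2]
    have hsb : Real.sinh b ≤ Real.exp (-mn) * Real.sinh d := by
      have h1 : Real.exp a * Real.sinh b ≤ Real.sinh d := by
        have h := exp_mul_sinh_le (a := a) (b := b) ha0
        rw [← hzseg]; exact h
      have h2 : (1:ℝ) ≤ Real.exp (-mn) * Real.exp a := by
        rw [← Real.exp_add]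
        exact Real.one_le_exp (by linarith only [hmna])
      have p1 := mul_le_mul_of_nonneg_left h1 (Real.exp_pos (-mn)).le
      have p2 := mul_le_mul_of_nonneg_right h2 (sinh_nonneg' hb0)
      nlinarith only [p1, p2]
    rw [hlam_def, hmu_def, ← add_div, div_le_iff₀ hsd]
    linarith only [hsa, hsb]
  have hSz : Sg γ z ≤ Real.exp (R - mn) := by
    have h1 : (lam + mu) * Real.sinh R ≤ (2 * Real.exp (-mn)) * (Real.exp R / 2) :=
      mul_le_mul hlammu_ub (sinh_le_half_exp R) hsR (by positivity)
    have h2 : (2 * Real.exp (-mn)) * (Real.exp R / 2) = Real.exp (R - mn) := by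
      rw [show Real.exp (R - mn) = Real.exp R * Real.exp (-mn) by
        rw [← Real.exp_add]; ring_nf]
      ring
    linarith only [hSz_le, h1, h2.le, h2.ge]
  -- Step C : position of z relative to the axis
  set Dz := hDist z (γ (taug γ z)) with hDz_def
  have hDz0 : 0 ≤ Dz := hDist_nonneg _ _
  have hcoshDz : Real.cosh Dz = Kg γ z := cosh_Ddist hγb hγd hzb
  have hsinhDz : Real.sinh Dz = Sg γ z := sinh_Ddist hγb hγd hzb
  set Δz := |taug γ 0 - taug γ z| with hΔz_def
  have hΔz0 : 0 ≤ Δz := abs_nonneg _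
  have hstepC : D + Δz - Dz ≤ m + 2 := by
    apply le_add_two_of_exp_le
    have hmaster := master hγb hγd h0b hzb
    rw [← hm_def] at hmaster
    have hCS := (abs_le.mp (ng_CS hγb hγd h0b hzb)).1
    rw [← hsinhD, ← hsinhDz] at hCS
    have h1 : Real.cosh D * Real.cosh Dz * Real.cosh Δz - Real.sinh D * Real.sinh Dz
        ≤ Real.cosh m := by
      rw [hmaster, hΔz_def, Real.cosh_abs, ← hcoshD, ← hcoshDz]
      linarith only [hCS]
    have hc1 : 1 ≤ Real.cosh Δz := Real.one_le_cosh _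
    have hs1 : 0 ≤ Real.sinh D * Real.sinh Dz :=
      mul_nonneg (sinh_nonneg' hD0) (sinh_nonneg' hDz0)
    have h2 : Real.cosh Δz * Real.cosh (D - Dz)
        ≤ Real.cosh D * Real.cosh Dz * Real.cosh Δz - Real.sinh D * Real.sinh Dz := by
      rw [Real.cosh_sub]
      nlinarith only [hc1, hs1]
    have h4 : Real.exp Δz / 2 ≤ Real.cosh Δz := half_exp_le_cosh Δz
    have h5 : Real.exp (D - Dz) / 2 ≤ Real.cosh (D - Dz) := half_exp_le_cosh _
    have h6 : Real.cosh m ≤ Real.exp m := cosh_le_exp hm0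
    have hp := mul_le_mul h4 h5 (by positivity) (Real.cosh_pos Δz).le
    have h7 : Real.exp (D + Δz - Dz) = Real.exp Δz * Real.exp (D - Dz) := by
      rw [← Real.exp_add]; ring_nf
    rw [h7]
    linarith only [hp, h2, h1, h6]
  rcases le_or_gt (3*N/4) R with hRbig | hRsmall
  · -- R large
    have hDz_ub : Dz ≤ R - 3*N/4 + 1 := by
      have h1 : Real.sinh Dz ≤ Real.exp (R - 3*N/4) := by
        rw [hsinhDz]
        exact hSz.trans (Real.exp_le_exp.mpr (by linarith only [hmn_lb]))
      have h2 : Real.exp (R - 3*N/4) ≤ Real.sinh (R - 3*N/4 + 1) :=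
        exp_le_sinh_add_one (by linarith only [hRbig])
      exact Real.sinh_le_sinh.mp (by linarith only [h1, h2])
    linarith only [hstepC, hDz_ub, hDR, hΔz0, hcon, hNs]
  · -- R small
    have hDz_ub : Dz ≤ 1 := by
      have h1 : Real.sinh Dz ≤ Real.exp (0:ℝ) := by
        rw [hsinhDz]
        exact hSz.trans (Real.exp_le_exp.mpr (by linarith only [hmn_lb, hRsmall]))
      have h2 : Real.exp (0:ℝ) ≤ Real.sinh (0 + 1) := exp_le_sinh_add_one (le_refl 0)
      rw [zero_add] at h2
      exact Real.sinh_le_sinh.mp (by linarith only [h1, h2])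
    have hD_ub : D ≤ m + 3 := by linarith only [hstepC, hΔz0, hDz_ub]
    have hDN : D < N/4 - 7 := by linarith only [hD_ub, hcon]
    have hRN : R < N/4 - 7 := by linarith only [hDR, hDN]
    set s₁ := taug γ P₁ - taug γ 0 with hs₁_def
    set s₂ := taug γ P₂ - taug γ 0 with hs₂_def
    have hsDcD : Real.sinh D ≤ Real.cosh D := by
      nlinarith only [Real.cosh_sub_sinh D, Real.exp_pos (-D)]
    have hsRcR : Real.sinh R ≤ Real.cosh R := by
      nlinarith only [Real.cosh_sub_sinh R, Real.exp_pos (-R)]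
    -- endpoints lie far out along the axis
    have haxial : ∀ w : E3, w ∈ ball3 → Kg γ w = Real.cosh R → Sg γ w = Real.sinh R →
        N ≤ hDist 0 w → N - D - R - 2 ≤ |taug γ w - taug γ 0| := by
      intro w hwb hKw hSw hNw
      set Δw := |taug γ w - taug γ 0| with hΔw_def
      have hΔw0 : 0 ≤ Δw := abs_nonneg _
      have hw0 : 0 ≤ hDist 0 w := hDist_nonneg _ _
      have hub : hDist 0 w ≤ D + R + Δw + 2 := by
        apply le_add_two_of_exp_le
        have hmaster := master hγb hγd h0b hwb
        have hCS := (abs_le.mp (ng_CS hγb hγd h0b hwb)).2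
        rw [← hsinhD, hSw] at hCS
        have hcΔ : Real.cosh (taug γ 0 - taug γ w) = Real.cosh Δw := by
          rw [hΔw_def, Real.cosh_abs, ← Real.cosh_neg, neg_sub]
        have h1 : Real.cosh (hDist 0 w)
            ≤ Real.cosh D * Real.cosh R * Real.cosh Δw + Real.sinh D * Real.sinh R := by
          rw [hmaster, hcΔ, ← hcoshD, hKw]
          linarith only [hCS]
        have hc1 : 1 ≤ Real.cosh Δw := Real.one_le_cosh _
        have q1 : Real.sinh D * Real.sinh R ≤ Real.cosh D * Real.cosh R := by
          nlinarith only [hsDcD, hsRcR, sinh_nonneg' hD0, sinh_nonneg' hRpos.le,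
            Real.cosh_pos D]
        have q2 : Real.cosh D * Real.cosh R ≤ Real.cosh D * Real.cosh R * Real.cosh Δw := by
          nlinarith only [hc1, mul_pos (Real.cosh_pos D) (Real.cosh_pos R)]
        have h3 : Real.cosh D ≤ Real.exp D := cosh_le_exp hD0
        have h4 : Real.cosh R ≤ Real.exp R := cosh_le_exp hRpos.le
        have h5 : Real.cosh Δw ≤ Real.exp Δw := cosh_le_exp hΔw0
        have q3 : Real.cosh D * Real.cosh R ≤ Real.exp D * Real.exp R :=
          mul_le_mul h3 h4 (Real.cosh_pos R).le (Real.exp_pos D).le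
        have q4 : Real.cosh D * Real.cosh R * Real.cosh Δw
            ≤ Real.exp D * Real.exp R * Real.exp Δw :=
          mul_le_mul q3 h5 (Real.cosh_pos Δw).le (by positivity)
        have h6 : Real.exp (hDist 0 w) / 2 ≤ Real.cosh (hDist 0 w) :=
          half_exp_le_cosh _
        have h7 : Real.exp (D + R + Δw) = Real.exp D * Real.exp R * Real.exp Δw := by
          rw [← Real.exp_add, ← Real.exp_add]
        rw [h7]
        linarith only [h6, h1, q1, q2, q4]
      linarith only [hub, hNw]
    have hΔ₁ : N - D - R - 2 ≤ |s₁| := haxial P₁ hP₁b hK₁ hS₁ hN₁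
    have hΔ₂ : N - D - R - 2 ≤ |s₂| := haxial P₂ hP₂b hK₂ hS₂ hN₂
    have hs₁pos : 0 < |s₁| := by linarith only [hΔ₁, hDN, hRN, hNs]
    have hs₂pos : 0 < |s₂| := by linarith only [hΔ₂, hDN, hRN, hNs]
    have hs₁ne : s₁ ≠ 0 := fun h => by rw [h, abs_zero] at hs₁pos; exact lt_irrefl 0 hs₁pos
    have hs₂ne : s₂ ≠ 0 := fun h => by rw [h, abs_zero] at hs₂pos; exact lt_irrefl 0 hs₂pos
    -- opposite signs impossible via the path
    have hopp : ¬ ((s₁ < 0 ∧ 0 < s₂) ∨ (s₂ < 0 ∧ 0 < s₁)) := by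
      rintro hcase
      obtain ⟨σ, hσc, hσ0, hσ1, hσmem⟩ := hpath
      have hFc : ContinuousOn (fun t => taug γ (σ t)) (Set.Icc 0 1) :=
        (continuousOn_taug hγb hγd).comp hσc (fun t ht => (hσmem t ht).1.1)
      have hwex : ∃ t ∈ Set.Icc (0:ℝ) 1, taug γ (σ t) = taug γ 0 := by
        rcases hcase with ⟨hn, hp⟩ | ⟨hn, hp⟩
        · have hsub := intermediate_value_Icc (by norm_num : (0:ℝ) ≤ 1) hFc
          have hmem : taug γ 0 ∈ Set.Icc (taug γ (σ 0)) (taug γ (σ 1)) := by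
            rw [hσ0, hσ1]
            exact ⟨by linarith only [hn, hs₁_def.ge, hs₁_def.le],
              by linarith only [hp, hs₂_def.ge, hs₂_def.le]⟩
          obtain ⟨t, ht, hFt⟩ := hsub hmem
          exact ⟨t, ht, hFt⟩
        · have hsub := intermediate_value_Icc' (by norm_num : (0:ℝ) ≤ 1) hFc
          have hmem : taug γ 0 ∈ Set.Icc (taug γ (σ 1)) (taug γ (σ 0)) := by
            rw [hσ0, hσ1]
            exact ⟨by linarith only [hn, hs₂_def.ge, hs₂_def.le],
              by linarith only [hp, hs₁_def.ge, hs₁_def.le]⟩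
          obtain ⟨t, ht, hFt⟩ := hsub hmem
          exact ⟨t, ht, hFt⟩
      obtain ⟨t, ht, hFt⟩ := hwex
      obtain ⟨hwtube, hNw⟩ := hσmem t ht
      obtain ⟨hwb, hwd⟩ := hwtube
      obtain ⟨hKw, hSw⟩ := tubeKS (σ t) hwb hwd
      have hub : hDist 0 (σ t) ≤ D + R := by
        apply le_of_cosh_le (hDist_nonneg _ _) (by linarith only [hD0, hRpos])
        have hmaster := master hγb hγd h0b hwb
        have hCS := (abs_le.mp (ng_CS hγb hγd h0b hwb)).2
        rw [← hsinhD, hSw] at hCS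
        have hτ : taug γ 0 - taug γ (σ t) = 0 := by rw [hFt]; ring
        rw [hmaster, hτ, Real.cosh_zero, Real.cosh_add, ← hcoshD, hKw]
        linarith only [hCS]
      linarith only [hub, hNw, hDN, hRN, hNs]
    -- axial upper/lower distance bounds for the Gromov product estimate
    have hu_lb : D + |s₁| - R ≤ u + 2 := by
      apply le_add_two_of_exp_le
      have hmaster := master hγb hγd h0b hP₁b
      rw [← hu_def] at hmaster
      have hCS := (abs_le.mp (ng_CS hγb hγd h0b hP₁b)).1
      rw [← hsinhD, hS₁] at hCS
      have hcΔ : Real.cosh (taug γ 0 - taug γ P₁) = Real.cosh |s₁| := by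
        rw [Real.cosh_abs, show taug γ 0 - taug γ P₁ = -s₁ by rw [hs₁_def]; ring,
          Real.cosh_neg]
      have h1 : Real.cosh D * Real.cosh R * Real.cosh |s₁| - Real.sinh D * Real.sinh R
          ≤ Real.cosh u := by
        rw [hmaster, hcΔ, ← hcoshD, hK₁]
        linarith only [hCS]
      have hc1 : 1 ≤ Real.cosh |s₁| := Real.one_le_cosh _
      have hs1 : 0 ≤ Real.sinh D * Real.sinh R :=
        mul_nonneg (sinh_nonneg' hD0) (sinh_nonneg' hRpos.le)
      have h2 : Real.cosh |s₁| * Real.cosh (D - R)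
          ≤ Real.cosh D * Real.cosh R * Real.cosh |s₁| - Real.sinh D * Real.sinh R := by
        rw [Real.cosh_sub]
        nlinarith only [hc1, hs1]
      have h4 : Real.exp |s₁| / 2 ≤ Real.cosh |s₁| := half_exp_le_cosh _
      have h5 : Real.exp (D - R) / 2 ≤ Real.cosh (D - R) := half_exp_le_cosh _
      have h6 : Real.cosh u ≤ Real.exp u := cosh_le_exp hu0
      have hp := mul_le_mul h4 h5 (by positivity) (Real.cosh_pos |s₁|).le
      have h7 : Real.exp (D + |s₁| - R) = Real.exp |s₁| * Real.exp (D - R) := by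
        rw [← Real.exp_add]; ring_nf
      rw [h7]
      linarith only [hp, h2, h1, h6]
    have hv_lb : D + |s₂| - R ≤ v + 2 := by
      apply le_add_two_of_exp_le
      have hmaster := master hγb hγd h0b hP₂b
      rw [← hv_def] at hmaster
      have hCS := (abs_le.mp (ng_CS hγb hγd h0b hP₂b)).1
      rw [← hsinhD, hS₂] at hCS
      have hcΔ : Real.cosh (taug γ 0 - taug γ P₂) = Real.cosh |s₂| := by
        rw [Real.cosh_abs, show taug γ 0 - taug γ P₂ = -s₂ by rw [hs₂_def]; ring,
          Real.cosh_neg]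
      have h1 : Real.cosh D * Real.cosh R * Real.cosh |s₂| - Real.sinh D * Real.sinh R
          ≤ Real.cosh v := by
        rw [hmaster, hcΔ, ← hcoshD, hK₂]
        linarith only [hCS]
      have hc1 : 1 ≤ Real.cosh |s₂| := Real.one_le_cosh _
      have hs1 : 0 ≤ Real.sinh D * Real.sinh R :=
        mul_nonneg (sinh_nonneg' hD0) (sinh_nonneg' hRpos.le)
      have h2 : Real.cosh |s₂| * Real.cosh (D - R)
          ≤ Real.cosh D * Real.cosh R * Real.cosh |s₂| - Real.sinh D * Real.sinh R := by
        rw [Real.cosh_sub]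
        nlinarith only [hc1, hs1]
      have h4 : Real.exp |s₂| / 2 ≤ Real.cosh |s₂| := half_exp_le_cosh _
      have h5 : Real.exp (D - R) / 2 ≤ Real.cosh (D - R) := half_exp_le_cosh _
      have h6 : Real.cosh v ≤ Real.exp v := cosh_le_exp hv0
      have hp := mul_le_mul h4 h5 (by positivity) (Real.cosh_pos |s₂|).le
      have h7 : Real.exp (D + |s₂| - R) = Real.exp |s₂| * Real.exp (D - R) := by
        rw [← Real.exp_add]; ring_nf
      rw [h7]
      linarith only [hp, h2, h1, h6]
    have hd_ub : d ≤ 2*R + |s₁ - s₂| + 2 := by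
      apply le_add_two_of_exp_le
      have hmaster := master hγb hγd hP₁b hP₂b
      rw [← hd_def] at hmaster
      have hCS := (abs_le.mp (ng_CS hγb hγd hP₁b hP₂b)).2
      rw [hS₁, hS₂] at hCS
      have hτ : taug γ P₁ - taug γ P₂ = s₁ - s₂ := by
        rw [hs₁_def, hs₂_def]; ring
      have h1 : Real.cosh d
          ≤ Real.cosh R * Real.cosh R * Real.cosh |s₁ - s₂|
            + Real.sinh R * Real.sinh R := by
        rw [hmaster, hτ, ← Real.cosh_abs, hK₁, hK₂]
        linarith only [hCS]
      have hc1 : 1 ≤ Real.cosh |s₁ - s₂| := Real.one_le_cosh _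
      have q1 : Real.sinh R * Real.sinh R ≤ Real.cosh R * Real.cosh R := by
        nlinarith only [hsRcR, sinh_nonneg' hRpos.le, Real.cosh_pos R]
      have q2 : Real.cosh R * Real.cosh R
          ≤ Real.cosh R * Real.cosh R * Real.cosh |s₁ - s₂| := by
        nlinarith only [hc1, mul_pos (Real.cosh_pos R) (Real.cosh_pos R)]
      have h3 : Real.cosh R ≤ Real.exp R := cosh_le_exp hRpos.le
      have h5 : Real.cosh |s₁ - s₂| ≤ Real.exp |s₁ - s₂| := cosh_le_exp (abs_nonneg _)
      have q3 : Real.cosh R * Real.cosh R ≤ Real.exp R * Real.exp R :=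
        mul_le_mul h3 h3 (Real.cosh_pos R).le (Real.exp_pos R).le
      have q4 : Real.cosh R * Real.cosh R * Real.cosh |s₁ - s₂|
          ≤ Real.exp R * Real.exp R * Real.exp |s₁ - s₂| :=
        mul_le_mul q3 h5 (Real.cosh_pos _).le (by positivity)
      have h6 : Real.exp d / 2 ≤ Real.cosh d := half_exp_le_cosh _
      have h7 : Real.exp (2*R + |s₁ - s₂|)
          = Real.exp R * Real.exp R * Real.exp |s₁ - s₂| := by
        rw [← Real.exp_add, ← Real.exp_add]; ring_nf
      rw [h7]
      linarith only [h6, h1, q1, q2, q4]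
    -- Gromov product lower bound for m
    have hGP : (u + v - d)/2 ≤ m + 2 := by
      apply le_add_two_of_exp_le
      have hone_a : (1:ℝ) ≤ a := by linarith only [hmn_lb, hmna, hNs]
      have hone_b : (1:ℝ) ≤ b := by linarith only [hmn_lb, hmnb, hNs]
      have hsa : Real.exp a / 3 ≤ Real.sinh a := exp_div_three_le_sinh hone_a
      have hsb : Real.exp b / 3 ≤ Real.sinh b := exp_div_three_le_sinh hone_b
      have hsd2 : Real.sinh d ≤ Real.exp d / 2 := sinh_le_half_exp d
      have hlam_lb : (2/3) * Real.exp (b - d) ≤ lam := by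
        rw [hlam_def, le_div_iff₀ hsd]
        have he : Real.exp (b - d) * Real.exp d = Real.exp b := by
          rw [← Real.exp_add]; ring_nf
        have p := mul_le_mul_of_nonneg_left hsd2
          (by positivity : (0:ℝ) ≤ (2/3) * Real.exp (b - d))
        nlinarith only [p, he, hsb]
      have hmu_lb : (2/3) * Real.exp (a - d) ≤ mu := by
        rw [hmu_def, le_div_iff₀ hsd]
        have he : Real.exp (a - d) * Real.exp d = Real.exp a := by
          rw [← Real.exp_add]; ring_nf
        have p := mul_le_mul_of_nonneg_left hsd2
          (by positivity : (0:ℝ) ≤ (2/3) * Real.exp (a - d))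
        nlinarith only [p, he, hsa]
      have hx0 : (0:ℝ) ≤ lam * Real.exp u := mul_nonneg hlam0 (Real.exp_pos u).le
      have hy0 : (0:ℝ) ≤ mu * Real.exp v := mul_nonneg hmu0 (Real.exp_pos v).le
      have hAM : Real.sqrt ((lam * Real.exp u) * (mu * Real.exp v))
          ≤ (lam * Real.exp u + mu * Real.exp v)/2 := by
        apply le_of_sq_le_sq'' (Real.sqrt_nonneg _)
          (by linarith only [hx0, hy0] : (0:ℝ) ≤ (lam * Real.exp u + mu * Real.exp v)/2)
        rw [Real.sq_sqrt (mul_nonneg hx0 hy0)]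
        nlinarith only [sq_nonneg (lam * Real.exp u - mu * Real.exp v)]
      have hhalf : (lam * Real.exp u + mu * Real.exp v)/2 ≤ Real.cosh m := by
        rw [hcoshm]
        have p1 := mul_le_mul_of_nonneg_left (half_exp_le_cosh u) hlam0
        have p2 := mul_le_mul_of_nonneg_left (half_exp_le_cosh v) hmu0
        linarith only [p1, p2]
      have hprod_lb : (4/9) * Real.exp (u + v - d)
          ≤ (lam * Real.exp u) * (mu * Real.exp v) := by
        have he : Real.exp (b - d) * Real.exp u * (Real.exp (a - d) * Real.exp v)
            = Real.exp (u + v - d) := by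
          rw [← Real.exp_add, ← Real.exp_add, ← Real.exp_add]
          congr 1
          have hsum : a + b = d := hzseg
          linarith only [hsum]
        calc (4/9) * Real.exp (u + v - d)
            = ((2/3) * Real.exp (b - d) * Real.exp u)
              * ((2/3) * Real.exp (a - d) * Real.exp v) := by rw [← he]; ring
          _ ≤ (lam * Real.exp u) * (mu * Real.exp v) := by
              apply mul_le_mul
              · exact mul_le_mul_of_nonneg_right hlam_lb (Real.exp_pos u).le
              · exact mul_le_mul_of_nonneg_right hmu_lb (Real.exp_pos v).le
              · positivity
              · exact mul_nonneg hlam0 (Real.exp_pos u).le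
      have hsqrt_lb : (2/3) * Real.exp ((u + v - d)/2)
          ≤ Real.sqrt ((lam * Real.exp u) * (mu * Real.exp v)) := by
        have h1 := Real.sqrt_le_sqrt hprod_lb
        have h2 : Real.sqrt ((4/9) * Real.exp (u + v - d))
            = (2/3) * Real.exp ((u + v - d)/2) := by
          rw [Real.sqrt_mul (by norm_num : (0:ℝ) ≤ 4/9), sqrt_exp_half,
            show Real.sqrt (4/9) = 2/3 by
              rw [show (4:ℝ)/9 = (2/3)^2 by norm_num, Real.sqrt_sq (by norm_num)]]
        linarith only [h1, h2.le, h2.ge]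
      have h6 : Real.cosh m ≤ Real.exp m := cosh_le_exp hm0
      linarith only [hsqrt_lb, hAM, hhalf, h6, Real.exp_pos m]
    -- conclude in the same-sign cases
    rcases lt_trichotomy s₁ 0 with h1 | h1 | h1
    · rcases lt_trichotomy s₂ 0 with h2 | h2 | h2
      · -- both negative
        have habs1 : |s₁| = -s₁ := abs_of_neg h1
        have habs2 : |s₂| = -s₂ := abs_of_neg h2
        have e1 : N - D - R - 2 ≤ -s₁ := by rw [habs1] at hΔ₁; exact hΔ₁
        have e2 : N - D - R - 2 ≤ -s₂ := by rw [habs2] at hΔ₂; exact hΔ₂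
        have hsame : |s₁ - s₂| ≤ |s₁| + |s₂| - 2*(N - D - R - 2) := by
          rw [habs1, habs2]
          rcases abs_cases (s₁ - s₂) with ⟨he, _⟩ | ⟨he, _⟩ <;> rw [he] <;>
            linarith only [e1, e2]
        linarith only [hGP, hu_lb, hv_lb, hd_ub, hsame, hRN, hcon, hNs, hDR]
      · exact absurd h2 hs₂ne
      · exact hopp (Or.inl ⟨h1, h2⟩)
    · exact absurd h1 hs₁ne
    · rcases lt_trichotomy s₂ 0 with h2 | h2 | h2
      · exact hopp (Or.inr ⟨h2, h1⟩)
      · exact absurd h2 hs₂ne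
      · -- both positive
        have habs1 : |s₁| = s₁ := abs_of_pos h1
        have habs2 : |s₂| = s₂ := abs_of_pos h2
        have e1 : N - D - R - 2 ≤ s₁ := by rw [habs1] at hΔ₁; exact hΔ₁
        have e2 : N - D - R - 2 ≤ s₂ := by rw [habs2] at hΔ₂; exact hΔ₂
        have hsame : |s₁ - s₂| ≤ |s₁| + |s₂| - 2*(N - D - R - 2) := by
          rw [habs1, habs2]
          rcases abs_cases (s₁ - s₂) with ⟨he, _⟩ | ⟨he, _⟩ <;> rw [he] <;>
            linarith only [e1, e2]
        linarith only [hGP, hu_lb, hv_lb, hd_ub, hsame, hRN, hcon, hNs, hDR]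

end
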